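/- With the setup of the previous equivalence of extensions (ψ = μ_z·∂φ, z ≠ 0, and Γ: E_ψ → E/K the isomorphism Γ(u,x) = ι(u·φ(x)⁻¹) + τ(x)), the image under Γ of the transversal {(1,x) : x ∈ G} ⊆ E_ψ equals {g + K ∈ E/K : φ'(g) ≡ 0 mod h}, where φ' is the expansion of φ of type z (here φ is viewed additively as a map G → ℤ_h via ζ_h^j ↔ j). -/

import Mathlib

open scoped BigOperators Pointwise

noncomputable section

/-- `zeta k` is the complex `k`-th root of unity `exp(2π√-1/k)`. -/
def zeta (k : ℕ) : ℂ := Complex.exp (2 * Real.pi * Complex.I / k)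

/-- Periodic autocorrelation of a map `f : A → ℤ_h` at shift `w`. -/
def AC {A : Type*} [AddCommGroup A] [Fintype A] (h : ℕ) (f : A → ZMod h) (w : A) : ℂ :=
  ∑ g : A, zeta h ^ (f g - f (g + w)).val

/-- The expansion `φ' : E → ℤ_h` of type `z` of an `h`-ary array `φ`:
`φ'(g) = φ(g mod s) + Σ_i ⌊g_i / s_i⌋ (mod h)`. -/
def expand (m h : ℕ) (s z : Fin m → ℕ) (φ : (∀ i, ZMod (s i)) → ZMod h)
    (g : ∀ i, ZMod ((z i * (h - 1) + 1) * s i)) : ZMod h :=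
  φ (fun i => ((g i).val : ZMod (s i))) + ((∑ i, (g i).val / s i : ℕ) : ZMod h)

/-- The set `L ⊆ E`. -/
def LSet (m h : ℕ) (s z : Fin m → ℕ) :
    Set (∀ i, ZMod ((z i * (h - 1) + 1) * s i)) :=
  {g | ∀ i, s i ∣ (g i).val ∧ (z i = 0 → (g i).val = 0)}

private theorem cast_val_mod {n t : ℕ} (hd : t ∣ n) (X : ℕ) :
    ((X % n : ℕ) : ZMod t) = (X : ZMod t) := by
  conv_rhs => rw [← Nat.div_add_mod X n]
  push_cast
  rw [(ZMod.natCast_eq_zero_iff n t).2 hd]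
  ring

/-- `L` as a subgroup of `E`. -/
def Lsub (m h : ℕ) (s z : Fin m → ℕ)
    [∀ i, NeZero ((z i * (h - 1) + 1) * s i)] :
    AddSubgroup (∀ i, ZMod ((z i * (h - 1) + 1) * s i)) where
  carrier := LSet m h s z
  zero_mem' := by
    intro i
    simp [ZMod.val_zero]
  add_mem' := by
    rintro a b ha hb i
    obtain ⟨ha1, ha2⟩ := ha i
    obtain ⟨hb1, hb2⟩ := hb i
    have hval : ((a + b) i).val = ((a i).val + (b i).val) % ((z i * (h - 1) + 1) * s i) :=
      ZMod.val_add _ _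
    constructor
    · rw [hval]
      exact (Nat.dvd_mod_iff (dvd_mul_left _ _)).2 (Nat.dvd_add ha1 hb1)
    · intro hzi
      rw [hval, ha2 hzi, hb2 hzi]
      simp
  neg_mem' := by
    rintro a ha i
    obtain ⟨ha1, ha2⟩ := ha i
    have hval : ((-a) i).val
        = if a i = 0 then 0 else (z i * (h - 1) + 1) * s i - (a i).val :=
      ZMod.neg_val _
    constructor
    · rw [hval]
      split
      · exact dvd_zero _
      · exact Nat.dvd_sub (dvd_mul_left _ _) ha1
    · intro hzi
      rw [hval]
      have : a i = 0 := (ZMod.val_eq_zero _).1 (ha2 hzi)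
      simp [this]

/-- `K = {g ∈ L : Σ_i g_i/s_i ≡ 0 (mod h)}` as a subgroup of `E`. -/
def Ksub (m h : ℕ) (s z : Fin m → ℕ)
    [∀ i, NeZero ((z i * (h - 1) + 1) * s i)]
    (hh : 2 ≤ h) (hs : ∀ i, 1 < s i) (hz : ∀ i, z i ≤ 1) :
    AddSubgroup (∀ i, ZMod ((z i * (h - 1) + 1) * s i)) where
  carrier := {g | g ∈ LSet m h s z ∧ (h : ℕ) ∣ ∑ i, (g i).val / s i}
  zero_mem' := by
    refine ⟨(Lsub m h s z).zero_mem', ?_⟩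
    simp [ZMod.val_zero]
  add_mem' := by
    rintro a b ⟨haL, haS⟩ ⟨hbL, hbS⟩
    refine ⟨(Lsub m h s z).add_mem' haL hbL, ?_⟩
    rw [← ZMod.natCast_eq_zero_iff] at haS hbS ⊢
    rw [Nat.cast_sum] at haS hbS ⊢
    have key : ∀ i, ((((a + b) i).val / s i : ℕ) : ZMod h)
        = (((a i).val / s i : ℕ) : ZMod h) + (((b i).val / s i : ℕ) : ZMod h) := by
      intro i
      have hzi : z i = 0 ∨ z i = 1 := by have := hz i; omega
      have hval : ((a + b) i).val = ((a i).val + (b i).val) % ((z i * (h - 1) + 1) * s i) :=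
        ZMod.val_add _ _
      rcases hzi with h0 | h1
      · have ha0 := (haL i).2 h0
        have hb0 := (hbL i).2 h0
        rw [hval, ha0, hb0]
        simp
      · have hc : z i * (h - 1) + 1 = h := by rw [h1]; omega
        obtain ⟨α, hα⟩ := (haL i).1
        obtain ⟨β, hβ⟩ := (hbL i).1
        have hspos : 0 < s i := by have := hs i; omega
        rw [hval, Nat.mod_mul_left_div_self, hα, hβ, ← Nat.mul_add,
          Nat.mul_div_cancel_left _ hspos, Nat.mul_div_cancel_left _ hspos,
          Nat.mul_div_cancel_left _ hspos, hc, ZMod.natCast_mod, Nat.cast_add]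
    rw [Finset.sum_congr rfl fun i _ => key i, Finset.sum_add_distrib, haS, hbS, add_zero]
  neg_mem' := by
    rintro a ⟨haL, haS⟩
    refine ⟨(Lsub m h s z).neg_mem' haL, ?_⟩
    rw [← ZMod.natCast_eq_zero_iff] at haS ⊢
    rw [Nat.cast_sum] at haS ⊢
    have key : ∀ i, ((((-a) i).val / s i : ℕ) : ZMod h)
        = -(((a i).val / s i : ℕ) : ZMod h) := by
      intro i
      have hzi : z i = 0 ∨ z i = 1 := by have := hz i; omega
      have hval : ((-a) i).val
          = if a i = 0 then 0 else (z i * (h - 1) + 1) * s i - (a i).val :=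
        ZMod.neg_val _
      by_cases h0 : a i = 0
      · rw [hval, if_pos h0, h0]
        simp [ZMod.val_zero]
      · rcases hzi with hz0 | hz1
        · exact absurd ((ZMod.val_eq_zero _).1 ((haL i).2 hz0)) h0
        · have hc : z i * (h - 1) + 1 = h := by rw [hz1]; omega
          obtain ⟨α, hα⟩ := (haL i).1
          have hspos : 0 < s i := by have := hs i; omega
          have hlt : (a i).val < (z i * (h - 1) + 1) * s i := ZMod.val_lt _
          have hαle : α ≤ z i * (h - 1) + 1 := by
            rw [hα, mul_comm (z i * (h - 1) + 1) (s i)] at hlt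
            have := Nat.lt_of_mul_lt_mul_left hlt
            omega
          have hsub : (z i * (h - 1) + 1) * s i - (a i).val
              = s i * ((z i * (h - 1) + 1) - α) := by
            rw [hα, mul_comm (z i * (h - 1) + 1) (s i)]
            exact (Nat.mul_sub _ _ _).symm
          rw [hval, if_neg h0, hsub, Nat.mul_div_cancel_left _ hspos, hα,
            Nat.mul_div_cancel_left _ hspos, Nat.cast_sub hαle, hc]
          simp
    rw [Finset.sum_congr rfl fun i _ => key i, Finset.sum_neg_distrib, haS, neg_zero]

/-- The reduction-mod-`s` homomorphism `E →+ G`. -/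
def resHom (m h : ℕ) (s z : Fin m → ℕ)
    [∀ i, NeZero ((z i * (h - 1) + 1) * s i)] :
    (∀ i, ZMod ((z i * (h - 1) + 1) * s i)) →+ (∀ i, ZMod (s i)) where
  toFun g i := ((g i).val : ZMod (s i))
  map_zero' := by
    funext i
    simp [ZMod.val_zero]
  map_add' a b := by
    funext i
    show (((a i + b i)).val : ZMod (s i)) = ((a i).val : ZMod (s i)) + ((b i).val : ZMod (s i))
    rw [ZMod.val_add, cast_val_mod (dvd_mul_left _ _), Nat.cast_add]

/-- The homomorphism `β : E/K → G` induced by reduction mod `s`. -/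
def betaHom (m h : ℕ) (s z : Fin m → ℕ)
    [∀ i, NeZero ((z i * (h - 1) + 1) * s i)]
    (hh : 2 ≤ h) (hs : ∀ i, 1 < s i) (hz : ∀ i, z i ≤ 1) :
    (∀ i, ZMod ((z i * (h - 1) + 1) * s i)) ⧸ Ksub m h s z hh hs hz →+ (∀ i, ZMod (s i)) :=
  QuotientAddGroup.lift (Ksub m h s z hh hs hz) (resHom m h s z) (by
    intro g hg
    funext i
    exact (ZMod.natCast_eq_zero_iff _ _).2 ((hg.1 i).1))

/-- The transversal map `τ : G → E/K`, `τ(x) = x + K`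
(embedding `x` with representatives `0 ≤ x_i < s_i`). -/
def tau (m h : ℕ) (s z : Fin m → ℕ)
    [∀ i, NeZero ((z i * (h - 1) + 1) * s i)]
    (hh : 2 ≤ h) (hs : ∀ i, 1 < s i) (hz : ∀ i, z i ≤ 1)
    (x : ∀ i, ZMod (s i)) :
    (∀ i, ZMod ((z i * (h - 1) + 1) * s i)) ⧸ Ksub m h s z hh hs hz :=
  QuotientAddGroup.mk (fun i => (((x i).val : ℕ) : ZMod ((z i * (h - 1) + 1) * s i)))

/-- The injection `ι : ⟨ζ_h⟩ ≅ ℤ_h → E/K`, sending `ζ_h^j` to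
`j • ((0,…,0,s_{i₀},0,…,0) + K)` for the fixed index `i₀` with `z i₀ = 1`. -/
def iota (m h : ℕ) (s z : Fin m → ℕ)
    [∀ i, NeZero ((z i * (h - 1) + 1) * s i)]
    (hh : 2 ≤ h) (hs : ∀ i, 1 < s i) (hz : ∀ i, z i ≤ 1)
    (i₀ : Fin m) (j : ZMod h) :
    (∀ i, ZMod ((z i * (h - 1) + 1) * s i)) ⧸ Ksub m h s z hh hs hz :=
  j.val • (QuotientAddGroup.mk
    (Pi.single i₀ ((s i₀ : ℕ) : ZMod ((z i₀ * (h - 1) + 1) * s i₀))))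

/-- `R` is a `(v,n,k,λ)`-relative difference set in the additive group `E`
relative to the (forbidden) subgroup `N`. -/
def IsAddRDS {E : Type*} [AddGroup E] (N : AddSubgroup E) (R : Set E)
    (v n k l : ℕ) : Prop :=
  N.index = v ∧ Nat.card N = n ∧ Nat.card R = k ∧
    (∀ r ∈ R, ∀ r' ∈ R, r - r' ∈ N → r = r') ∧
    ∀ x : E, x ∉ N → Nat.card {p : R × R // (p.1 : E) - (p.2 : E) = x} = l

/-- A Butson Hadamard matrix in `BH(n,k)`. -/
def IsBH {ι : Type*} [Fintype ι] [DecidableEq ι] (n k : ℕ) (M : Matrix ι ι ℂ) : Prop :=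
  Fintype.card ι = n ∧ (∀ a b, ∃ j : ℕ, M a b = zeta k ^ j) ∧
    M * M.conjTranspose = (n : ℂ) • (1 : Matrix ι ι ℂ)

end

/-- The cocycle `μ_z` in exponent form:
`μ_z(x,y) = ζ_h^{Σ_{i : z i = 1} ⌊(x_i+y_i)/s_i⌋}`. -/
def muexp (m h : ℕ) (s z : Fin m → ℕ) (x y : ∀ i, ZMod (s i)) : ZMod h :=
  ((∑ i, if z i = 1 then ((x i).val + (y i).val) / s i else 0 : ℕ) : ZMod h)

/-- The cocycle `ψ = μ_z·∂φ` in exponent form. -/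
def psiexp (m h : ℕ) (s z : Fin m → ℕ) (φ : (∀ i, ZMod (s i)) → ZMod h)
    (x y : ∀ i, ZMod (s i)) : ZMod h :=
  muexp m h s z x y + (φ (x + y) - φ x - φ y)

/-- Multiplication of the central extension `E_ψ` determined by `ψ = μ_z·∂φ`:
the underlying set is `⟨ζ_h⟩ × G ≅ ℤ_h × G`, with
`(u,x)·(v,y) = (u·v·ψ(x,y), x+y)`. -/
def emul (m h : ℕ) (s z : Fin m → ℕ) (φ : (∀ i, ZMod (s i)) → ZMod h)
    (p q : ZMod h × (∀ i, ZMod (s i))) : ZMod h × (∀ i, ZMod (s i)) :=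
  (p.1 + q.1 + psiexp m h s z φ p.2 q.2, p.2 + q.2)

/-- The map `Γ : E_ψ → E/K`, `Γ(u,x) = ι(u·φ(x)⁻¹) + τ(x)`. -/
def Gamma (m h : ℕ) (s z : Fin m → ℕ)
    [∀ i, NeZero ((z i * (h - 1) + 1) * s i)]
    (hh : 2 ≤ h) (hs : ∀ i, 1 < s i) (hz : ∀ i, z i ≤ 1)
    (i₀ : Fin m) (φ : (∀ i, ZMod (s i)) → ZMod h)
    (p : ZMod h × (∀ i, ZMod (s i))) :
    (∀ i, ZMod ((z i * (h - 1) + 1) * s i)) ⧸ Ksub m h s z hh hs hz :=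
  iota m h s z hh hs hz i₀ (p.1 - φ p.2) + tau m h s z hh hs hz p.2

section GammaHelpers

variable (m h : ℕ) (s z : Fin m → ℕ)

/-- A representative in `E` of `Γ(0,x)` with exponent `j`. -/
def repE (i₀ : Fin m) (j : ZMod h) (x : ∀ i, ZMod (s i)) :
    ∀ i, ZMod ((z i * (h - 1) + 1) * s i) :=
  j.val • Pi.single i₀ ((s i₀ : ℕ) : ZMod ((z i₀ * (h - 1) + 1) * s i₀))
    + fun i => (((x i).val : ℕ) : ZMod ((z i * (h - 1) + 1) * s i))

lemma repE_apply_ne (i₀ : Fin m) (j : ZMod h) (x : ∀ i, ZMod (s i)) {i : Fin m}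
    (hne : i ≠ i₀) :
    repE m h s z i₀ j x i = (((x i).val : ℕ) : ZMod ((z i * (h - 1) + 1) * s i)) := by
  simp [repE, Pi.single_apply, hne]

lemma repE_apply_self (i₀ : Fin m) (j : ZMod h) (x : ∀ i, ZMod (s i)) :
    repE m h s z i₀ j x i₀
      = (((x i₀).val + j.val * s i₀ : ℕ) : ZMod ((z i₀ * (h - 1) + 1) * s i₀)) := by
  rw [repE]
  simp only [Pi.add_apply, Pi.smul_apply, Pi.single_eq_same]
  rw [nsmul_eq_mul]
  push_cast
  ring

variable [∀ i, NeZero ((z i * (h - 1) + 1) * s i)]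

lemma val_repE_ne (hs : ∀ i, 1 < s i) (i₀ : Fin m) (j : ZMod h)
    (x : ∀ i, ZMod (s i)) {i : Fin m} (hne : i ≠ i₀) :
    (repE m h s z i₀ j x i).val = (x i).val := by
  haveI : NeZero (s i) := ⟨by have := hs i; omega⟩
  have hlt : (x i).val < (z i * (h - 1) + 1) * s i := by
    have h1 : (x i).val < s i := ZMod.val_lt _
    have h2 : s i ≤ (z i * (h - 1) + 1) * s i := Nat.le_mul_of_pos_left _ (by omega)
    omega
  rw [repE_apply_ne m h s z i₀ j x hne, ZMod.val_natCast, Nat.mod_eq_of_lt hlt]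

lemma val_repE_self (hh : 2 ≤ h) (hs : ∀ i, 1 < s i) (i₀ : Fin m) (hi₀ : z i₀ = 1)
    (j : ZMod h) (x : ∀ i, ZMod (s i)) :
    (repE m h s z i₀ j x i₀).val = (x i₀).val + j.val * s i₀ := by
  haveI : NeZero h := ⟨by omega⟩
  haveI : NeZero (s i₀) := ⟨by have := hs i₀; omega⟩
  have hc : z i₀ * (h - 1) + 1 = h := by rw [hi₀]; omega
  have hx : (x i₀).val < s i₀ := ZMod.val_lt _
  have hj : j.val < h := ZMod.val_lt _
  have hlt : (x i₀).val + j.val * s i₀ < (z i₀ * (h - 1) + 1) * s i₀ := by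
    rw [hc]
    have h1 : j.val * s i₀ ≤ (h - 1) * s i₀ := Nat.mul_le_mul_right _ (by omega)
    have h2 : h * s i₀ = (h - 1) * s i₀ + s i₀ := by
      have h3 : (h - 1 + 1) * s i₀ = (h - 1) * s i₀ + s i₀ := Nat.succ_mul _ _
      rwa [Nat.sub_add_cancel (by omega : 1 ≤ h)] at h3
    omega
  rw [repE_apply_self, ZMod.val_natCast, Nat.mod_eq_of_lt hlt]

lemma expand_repE (hh : 2 ≤ h) (hs : ∀ i, 1 < s i) (i₀ : Fin m) (hi₀ : z i₀ = 1)
    (φ : (∀ i, ZMod (s i)) → ZMod h) (j : ZMod h) (x : ∀ i, ZMod (s i)) :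
    expand m h s z φ (repE m h s z i₀ j x) = φ x + j := by
  haveI : NeZero h := ⟨by omega⟩
  haveI : ∀ i, NeZero (s i) := fun i => ⟨by have := hs i; omega⟩
  have harg : (fun i => (((repE m h s z i₀ j x i).val : ℕ) : ZMod (s i))) = x := by
    funext i
    haveI : NeZero (s i) := ⟨by have := hs i; omega⟩
    by_cases hne : i = i₀
    · subst hne
      rw [val_repE_self m h s z hh hs i hi₀ j x]
      push_cast
      simp [ZMod.natCast_val, ZMod.cast_id, ZMod.natCast_self]
    · rw [val_repE_ne m h s z hs i₀ j x hne]
      simp [ZMod.natCast_val, ZMod.cast_id]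

  have hsum : (∑ i, (repE m h s z i₀ j x i).val / s i) = j.val := by
    rw [Finset.sum_eq_single i₀]
    · rw [val_repE_self m h s z hh hs i₀ hi₀ j x]
      have hx : (x i₀).val < s i₀ := ZMod.val_lt _
      rw [Nat.add_mul_div_right _ _ (show 0 < s i₀ by have := hs i₀; omega),
        Nat.div_eq_of_lt hx, zero_add]
    · intro i _ hne
      rw [val_repE_ne m h s z hs i₀ j x hne]
      exact Nat.div_eq_of_lt (ZMod.val_lt _)
    · intro hmem
      exact absurd (Finset.mem_univ i₀) hmem
  rw [expand, harg, hsum]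
  simp [ZMod.natCast_val, ZMod.cast_id]

lemma Gamma_zero (hh : 2 ≤ h) (hs : ∀ i, 1 < s i) (hz : ∀ i, z i ≤ 1)
    (i₀ : Fin m) (φ : (∀ i, ZMod (s i)) → ZMod h) (x : ∀ i, ZMod (s i)) :
    Gamma m h s z hh hs hz i₀ φ ((0 : ZMod h), x)
      = QuotientAddGroup.mk (repE m h s z i₀ (-(φ x)) x) := by
  show iota m h s z hh hs hz i₀ (0 - φ x) + tau m h s z hh hs hz x = _
  rw [zero_sub, iota, tau, repE, ← QuotientAddGroup.mk_nsmul, ← QuotientAddGroup.mk_add]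

/-- The key coset computation: if `φ'(g) = 0` then `g` and the canonical
representative `repE (-(φ x)) x` (with `x = g mod s`) differ by an element of `K`. -/
lemma sub_repE_mem_Ksub (hh : 2 ≤ h) (hs : ∀ i, 1 < s i) (hz : ∀ i, z i ≤ 1)
    (i₀ : Fin m) (hi₀ : z i₀ = 1) (φ : (∀ i, ZMod (s i)) → ZMod h)
    (g : ∀ i, ZMod ((z i * (h - 1) + 1) * s i))
    (hg : expand m h s z φ g = 0) :
    g - repE m h s z i₀ (-(φ (fun i => (((g i).val : ℕ) : ZMod (s i)))))
        (fun i => (((g i).val : ℕ) : ZMod (s i)))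
      ∈ Ksub m h s z hh hs hz := by
  haveI : NeZero h := ⟨by omega⟩
  set x : ∀ i, ZMod (s i) := fun i => (((g i).val : ℕ) : ZMod (s i)) with hxdef
  set j : ZMod h := -(φ x) with hjdef
  set a : Fin m → ℕ := fun i => (g i).val with hadef
  set q : Fin m → ℕ := fun i => a i / s i with hqdef
  have hspos : ∀ i, 0 < s i := fun i => by have := hs i; omega
  have hxval : ∀ i, (x i).val = a i % s i := by
    intro i
    haveI : NeZero (s i) := ⟨by have := hs i; omega⟩
    exact ZMod.val_natCast _ _
  have hgval : ∀ i, g i = ((a i : ℕ) : ZMod ((z i * (h - 1) + 1) * s i)) := by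
    intro i
    simp [hadef, ZMod.natCast_val, ZMod.cast_id]
  have halt : ∀ i, a i < (z i * (h - 1) + 1) * s i := fun i => ZMod.val_lt _
  have hqlt : ∀ i, q i < z i * (h - 1) + 1 := by
    intro i
    have := halt i
    rw [mul_comm] at this
    exact Nat.div_lt_of_lt_mul (by omega)
  -- component at i ≠ i₀ :
  have hval_ne : ∀ i, i ≠ i₀ →
      ((g - repE m h s z i₀ j x) i).val = s i * q i := by
    intro i hne
    have hr : a i % s i ≤ a i := Nat.mod_le _ _
    have : (g - repE m h s z i₀ j x) i
        = (((a i - a i % s i : ℕ)) : ZMod ((z i * (h - 1) + 1) * s i)) := by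
      show g i - repE m h s z i₀ j x i = _
      rw [hgval i, repE_apply_ne m h s z i₀ j x hne, hxval i, Nat.cast_sub hr]
    rw [this, ZMod.val_natCast, Nat.mod_eq_of_lt (by have := halt i; omega)]
    have := Nat.div_add_mod (a i) (s i)
    simp only [hqdef]
    omega
  -- component at i₀ :
  have hc : z i₀ * (h - 1) + 1 = h := by rw [hi₀]; omega
  set t : ℕ := if j.val ≤ q i₀ then q i₀ - j.val else q i₀ + h - j.val with htdef
  have hjlt : j.val < h := ZMod.val_lt _
  have hq0lt : q i₀ < h := by have := hqlt i₀; omega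
  have htlt : t < h := by rw [htdef]; split <;> omega
  obtain ⟨k, hk⟩ : ∃ k, t + j.val = q i₀ + k * h := by
    rw [htdef]; split
    · exact ⟨0, by omega⟩
    · exact ⟨1, by omega⟩
  have hval_self : ((g - repE m h s z i₀ j x) i₀).val = t * s i₀ := by
    have key : (g - repE m h s z i₀ j x) i₀
        = ((t * s i₀ : ℕ) : ZMod ((z i₀ * (h - 1) + 1) * s i₀)) := by
      show g i₀ - repE m h s z i₀ j x i₀ = _
      rw [hgval i₀, repE_apply_self, hxval i₀, sub_eq_iff_eq_add, ← Nat.cast_add]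
      have harith : t * s i₀ + (a i₀ % s i₀ + j.val * s i₀)
          = a i₀ + k * ((z i₀ * (h - 1) + 1) * s i₀) := by
        rw [hc]
        have hdm : s i₀ * q i₀ + a i₀ % s i₀ = a i₀ := Nat.div_add_mod (a i₀) (s i₀)
        have h1 : (t + j.val) * s i₀ = (q i₀ + k * h) * s i₀ := by
          rw [hk]
        linarith [h1, hdm]
      rw [harith, Nat.cast_add, Nat.cast_mul, ZMod.natCast_self, mul_zero, add_zero]
    rw [key, ZMod.val_natCast, Nat.mod_eq_of_lt]
    calc t * s i₀ < h * s i₀ := by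
          exact (Nat.mul_lt_mul_right (hspos i₀)).mpr htlt
      _ = (z i₀ * (h - 1) + 1) * s i₀ := by rw [hc]
  -- membership in L :
  have hL : (g - repE m h s z i₀ j x) ∈ LSet m h s z := by
    intro i
    by_cases hne : i = i₀
    · subst hne
      rw [hval_self]
      exact ⟨dvd_mul_left _ t, fun h0 => by rw [h0] at hi₀; omega⟩
    · rw [hval_ne i hne]
      refine ⟨dvd_mul_right (s i) (q i), fun h0 => ?_⟩
      have : a i < s i := by have := halt i; rw [h0] at this; omega
      have : q i = 0 := Nat.div_eq_of_lt this
      rw [this, mul_zero]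
  refine ⟨hL, ?_⟩
  -- the divisibility condition :
  have hsum : (∑ i, ((g - repE m h s z i₀ j x) i).val / s i)
      = (∑ i ∈ Finset.univ.erase i₀, q i) + t := by
    rw [← Finset.sum_erase_add _ _ (Finset.mem_univ i₀)]
    congr 1
    · refine Finset.sum_congr rfl fun i hi => ?_
      rw [hval_ne i (Finset.ne_of_mem_erase hi), Nat.mul_div_cancel_left _ (hspos i)]
    · rw [hval_self, Nat.mul_div_cancel _ (hspos i₀)]
  rw [← ZMod.natCast_eq_zero_iff, hsum]
  have hsumq : ((∑ i, q i : ℕ) : ZMod h) = j := by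
    have := hg
    rw [expand] at this
    have hx' : (fun i => (((g i).val : ℕ) : ZMod (s i))) = x := rfl
    rw [hx'] at this
    have : φ x + ((∑ i, a i / s i : ℕ) : ZMod h) = 0 := this
    rw [hjdef]
    simp only [hqdef]
    linear_combination this
  have hsplit : (∑ i, q i) = (∑ i ∈ Finset.univ.erase i₀, q i) + q i₀ :=
    (Finset.sum_erase_add _ _ (Finset.mem_univ i₀)).symm
  have htcast : ((t : ℕ) : ZMod h) = (q i₀ : ZMod h) - j := by
    have : ((t + j.val : ℕ) : ZMod h) = ((q i₀ + k * h : ℕ) : ZMod h) := by rw [hk]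
    push_cast at this
    rw [ZMod.natCast_val, ZMod.cast_id, ZMod.natCast_self] at this
    linear_combination this
  have B : ((∑ i, q i : ℕ) : ZMod h)
      = ((∑ i ∈ Finset.univ.erase i₀, q i : ℕ) : ZMod h) + ((q i₀ : ℕ) : ZMod h) := by
    rw [hsplit]; push_cast; ring
  push_cast
  push_cast at B hsumq htcast
  linear_combination hsumq - B + htcast

end GammaHelpers

/-- the image under `Γ` of the transversal `{(1,x) : x ∈ G} ⊆ E_ψ`
equals `{g + K ∈ E/K : φ'(g) ≡ 0 (mod h)}`, where `φ'` is the expansion of `φ`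
of type `z`. -/
theorem Gamma_image_transversal
    (m h : ℕ) (s z : Fin m → ℕ)
    [∀ i, NeZero ((z i * (h - 1) + 1) * s i)]
    (hh : 2 ≤ h) (hs : ∀ i, 1 < s i) (hz : ∀ i, z i ≤ 1)
    (i₀ : Fin m) (hi₀ : z i₀ = 1)
    (φ : (∀ i, ZMod (s i)) → ZMod h) (hφ0 : φ 0 = 0) :
    Gamma m h s z hh hs hz i₀ φ ''
        (Set.range fun x : ∀ i, ZMod (s i) => ((0 : ZMod h), x))
      = QuotientAddGroup.mk (s := Ksub m h s z hh hs hz) ''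
          {g | expand m h s z φ g = 0} := by
  ext Q
  constructor
  · rintro ⟨p, ⟨x, rfl⟩, rfl⟩
    refine ⟨repE m h s z i₀ (-(φ x)) x, ?_, (Gamma_zero m h s z hh hs hz i₀ φ x).symm⟩
    show expand m h s z φ _ = 0
    rw [expand_repE m h s z hh hs i₀ hi₀ φ (-(φ x)) x]
    ring
  · rintro ⟨g, hg, rfl⟩
    set x : ∀ i, ZMod (s i) := fun i => (((g i).val : ℕ) : ZMod (s i)) with hxdef
    refine ⟨((0 : ZMod h), x), ⟨x, rfl⟩, ?_⟩
    rw [Gamma_zero m h s z hh hs hz i₀ φ x, QuotientAddGroup.eq]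
    have hmem := sub_repE_mem_Ksub m h s z hh hs hz i₀ hi₀ φ g hg
    have : -(repE m h s z i₀ (-(φ x)) x) + g
        = g - repE m h s z i₀ (-(φ x)) x := by abel
    rw [this]
    exact hmem
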